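/- Let α^{c,c}, α^{c,a}, α^{a,c}, α^{a,a} > 0 and β^{c,c}, β^{c,a}, β^{a,c}, β^{a,a} > 0, let K ≥ 1, and for each conversation m = 1,…,K let A_{0,m}^c ≤ ⋯ ≤ A_{n_m^c,m}^c ≤ t and A_{1,m}^a ≤ ⋯ ≤ A_{n_m^a,m}^a ≤ t be its customer and agent message times. Then Σ_{m=1}^{K} ∫_t^∞ (λ_{s,m}^c + λ_{s,m}^a) ds converges and equals Σ_{m=1}^{K} [ Σ_{i=0}^{n_m^c} (α^{c,c}/β^{c,c}) e^{−β^{c,c}(t−A_{i,m}^c)} + Σ_{j=1}^{n_m^a} (α^{c,a}/β^{c,a}) e^{−β^{c,a}(t−A_{j,m}^a)} + Σ_{i=0}^{n_m^c} (α^{a,c}/β^{a,c}) e^{−β^{a,c}(t−A_{i,m}^c)} + Σ_{j=1}^{n_m^a} (α^{a,a}/β^{a,a}) e^{−β^{a,a}(t−A_{j,m}^a)} ]. Consequently, the probability that all of the agent's K conversations are complete at time t in the BHP conversation model equals exp of minus this sum (Proposition 4, BHP case). -/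

import Mathlib

open MeasureTheory Filter

lemma bhp_key (a b A t : ℝ) (hb : 0 < b) :
    IntegrableOn (fun s => a * Real.exp (-b*(s-A))) (Set.Ioi t) ∧
    (∫ s in Set.Ioi t, a * Real.exp (-b*(s-A))) = a/b * Real.exp (-b*(t-A)) := by
  have heq : (fun s => a * Real.exp (-b*(s-A))) = fun s => (a * Real.exp (b*A)) * Real.exp (-b*s) := by
    funext s; rw [mul_assoc, ← Real.exp_add]; congr 1; ring
  have hInt : IntegrableOn (fun s => a * Real.exp (-b*(s-A))) (Set.Ioi t) := by
    rw [heq]; exact (exp_neg_integrableOn_Ioi t hb).const_mul _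
  refine ⟨hInt, ?_⟩
  have hderiv : ∀ x ∈ Set.Ici t, HasDerivAt (fun s => -(a/b) * Real.exp (-b*(s-A)))
      (a * Real.exp (-b*(x-A))) x := by
    intro x _
    have h1 : HasDerivAt (fun s : ℝ => -b*(s-A)) (-b) x := by
      simpa using ((hasDerivAt_id x).sub_const A).const_mul (-b)
    have h2 := (h1.exp.const_mul (-(a/b)))
    refine h2.congr_deriv ?_
    field_simp
  have htend : Tendsto (fun s => -(a/b) * Real.exp (-b*(s-A))) atTop (nhds 0) := by
    have : Tendsto (fun s : ℝ => -b*(s-A)) atTop atBot := by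
      apply Tendsto.const_mul_atTop_of_neg (neg_neg_iff_pos.mpr hb)
      exact tendsto_atTop_add_const_right _ _ tendsto_id
    simpa using (Real.tendsto_exp_atBot.comp this).const_mul (-(a/b))
  have := integral_Ioi_of_hasDerivAt_of_tendsto'
    (f := fun s => -(a/b) * Real.exp (-b*(s-A))) hderiv hInt htend
  rw [this]
  ring

theorem bhp_agent_no_more_messages
    (acc aca aac aaa bcc bca bac baa : ℝ)
    (hacc : 0 < acc) (haca : 0 < aca) (haac : 0 < aac) (haaa : 0 < aaa)
    (hbcc : 0 < bcc) (hbca : 0 < bca) (hbac : 0 < bac) (hbaa : 0 < baa)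
    (K : ℕ) (hK : 1 ≤ K)
    (nc na : ℕ → ℕ) (Ac Aa : ℕ → ℕ → ℝ) (t : ℝ)
    (hAcmono : ∀ m ∈ Finset.Icc 1 K, ∀ i < nc m, Ac m i ≤ Ac m (i + 1))
    (hAct : ∀ m ∈ Finset.Icc 1 K, Ac m (nc m) ≤ t)
    (hAamono : ∀ m ∈ Finset.Icc 1 K, ∀ j, 1 ≤ j → j < na m → Aa m j ≤ Aa m (j + 1))
    (hAat : ∀ m ∈ Finset.Icc 1 K, 1 ≤ na m → Aa m (na m) ≤ t) :
    (∀ m ∈ Finset.Icc 1 K, IntegrableOn (fun s =>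
        ((∑ i ∈ Finset.range (nc m + 1), acc * Real.exp (-bcc * (s - Ac m i)))
            + (∑ j ∈ Finset.Icc 1 (na m), aca * Real.exp (-bca * (s - Aa m j))))
          + ((∑ i ∈ Finset.range (nc m + 1), aac * Real.exp (-bac * (s - Ac m i)))
            + (∑ j ∈ Finset.Icc 1 (na m), aaa * Real.exp (-baa * (s - Aa m j))))) (Set.Ioi t))
    ∧ (∑ m ∈ Finset.Icc 1 K, ∫ s in Set.Ioi t,
          ((∑ i ∈ Finset.range (nc m + 1), acc * Real.exp (-bcc * (s - Ac m i)))
            + (∑ j ∈ Finset.Icc 1 (na m), aca * Real.exp (-bca * (s - Aa m j))))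
          + ((∑ i ∈ Finset.range (nc m + 1), aac * Real.exp (-bac * (s - Ac m i)))
            + (∑ j ∈ Finset.Icc 1 (na m), aaa * Real.exp (-baa * (s - Aa m j)))))
      = (∑ m ∈ Finset.Icc 1 K,
        ((∑ i ∈ Finset.range (nc m + 1), acc / bcc * Real.exp (-bcc * (t - Ac m i)))
          + (∑ j ∈ Finset.Icc 1 (na m), aca / bca * Real.exp (-bca * (t - Aa m j)))
          + (∑ i ∈ Finset.range (nc m + 1), aac / bac * Real.exp (-bac * (t - Ac m i)))
          + (∑ j ∈ Finset.Icc 1 (na m), aaa / baa * Real.exp (-baa * (t - Aa m j)))))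
    ∧ Real.exp (-(∑ m ∈ Finset.Icc 1 K, ∫ s in Set.Ioi t,
          ((∑ i ∈ Finset.range (nc m + 1), acc * Real.exp (-bcc * (s - Ac m i)))
            + (∑ j ∈ Finset.Icc 1 (na m), aca * Real.exp (-bca * (s - Aa m j))))
          + ((∑ i ∈ Finset.range (nc m + 1), aac * Real.exp (-bac * (s - Ac m i)))
            + (∑ j ∈ Finset.Icc 1 (na m), aaa * Real.exp (-baa * (s - Aa m j))))))
      = Real.exp (-(∑ m ∈ Finset.Icc 1 K,
        ((∑ i ∈ Finset.range (nc m + 1), acc / bcc * Real.exp (-bcc * (t - Ac m i)))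
          + (∑ j ∈ Finset.Icc 1 (na m), aca / bca * Real.exp (-bca * (t - Aa m j)))
          + (∑ i ∈ Finset.range (nc m + 1), aac / bac * Real.exp (-bac * (t - Ac m i)))
          + (∑ j ∈ Finset.Icc 1 (na m), aaa / baa * Real.exp (-baa * (t - Aa m j)))))) := by
  have hI1 : ∀ m, IntegrableOn (fun s =>
      ∑ i ∈ Finset.range (nc m + 1), acc * Real.exp (-bcc * (s - Ac m i))) (Set.Ioi t) :=
    fun m => integrable_finset_sum _ (fun i _ => (bhp_key acc bcc (Ac m i) t hbcc).1)
  have hI2 : ∀ m, IntegrableOn (fun s =>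
      ∑ j ∈ Finset.Icc 1 (na m), aca * Real.exp (-bca * (s - Aa m j))) (Set.Ioi t) :=
    fun m => integrable_finset_sum _ (fun j _ => (bhp_key aca bca (Aa m j) t hbca).1)
  have hI3 : ∀ m, IntegrableOn (fun s =>
      ∑ i ∈ Finset.range (nc m + 1), aac * Real.exp (-bac * (s - Ac m i))) (Set.Ioi t) :=
    fun m => integrable_finset_sum _ (fun i _ => (bhp_key aac bac (Ac m i) t hbac).1)
  have hI4 : ∀ m, IntegrableOn (fun s =>
      ∑ j ∈ Finset.Icc 1 (na m), aaa * Real.exp (-baa * (s - Aa m j))) (Set.Ioi t) :=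
    fun m => integrable_finset_sum _ (fun j _ => (bhp_key aaa baa (Aa m j) t hbaa).1)
  have hint : ∀ m, ∫ s in Set.Ioi t,
          ((∑ i ∈ Finset.range (nc m + 1), acc * Real.exp (-bcc * (s - Ac m i)))
            + (∑ j ∈ Finset.Icc 1 (na m), aca * Real.exp (-bca * (s - Aa m j))))
          + ((∑ i ∈ Finset.range (nc m + 1), aac * Real.exp (-bac * (s - Ac m i)))
            + (∑ j ∈ Finset.Icc 1 (na m), aaa * Real.exp (-baa * (s - Aa m j))))
      = ((∑ i ∈ Finset.range (nc m + 1), acc / bcc * Real.exp (-bcc * (t - Ac m i)))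
          + (∑ j ∈ Finset.Icc 1 (na m), aca / bca * Real.exp (-bca * (t - Aa m j)))
          + (∑ i ∈ Finset.range (nc m + 1), aac / bac * Real.exp (-bac * (t - Ac m i)))
          + (∑ j ∈ Finset.Icc 1 (na m), aaa / baa * Real.exp (-baa * (t - Aa m j)))) := by
    intro m
    have hall := integral_add (μ := volume.restrict (Set.Ioi t))
      ((hI1 m).add (hI2 m)) ((hI3 m).add (hI4 m))
    simp only [Pi.add_apply] at hall
    rw [hall, integral_add (hI1 m) (hI2 m), integral_add (hI3 m) (hI4 m),
        integral_finset_sum _ (fun i _ => (bhp_key acc bcc (Ac m i) t hbcc).1),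
        integral_finset_sum _ (fun j _ => (bhp_key aca bca (Aa m j) t hbca).1),
        integral_finset_sum _ (fun i _ => (bhp_key aac bac (Ac m i) t hbac).1),
        integral_finset_sum _ (fun j _ => (bhp_key aaa baa (Aa m j) t hbaa).1)]
    rw [Finset.sum_congr rfl (fun i _ => (bhp_key acc bcc (Ac m i) t hbcc).2),
        Finset.sum_congr rfl (fun j _ => (bhp_key aca bca (Aa m j) t hbca).2),
        Finset.sum_congr rfl (fun i _ => (bhp_key aac bac (Ac m i) t hbac).2),
        Finset.sum_congr rfl (fun j _ => (bhp_key aaa baa (Aa m j) t hbaa).2)]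
    ring
  have hsum : (∑ m ∈ Finset.Icc 1 K, ∫ s in Set.Ioi t,
          ((∑ i ∈ Finset.range (nc m + 1), acc * Real.exp (-bcc * (s - Ac m i)))
            + (∑ j ∈ Finset.Icc 1 (na m), aca * Real.exp (-bca * (s - Aa m j))))
          + ((∑ i ∈ Finset.range (nc m + 1), aac * Real.exp (-bac * (s - Ac m i)))
            + (∑ j ∈ Finset.Icc 1 (na m), aaa * Real.exp (-baa * (s - Aa m j)))))
      = (∑ m ∈ Finset.Icc 1 K,
        ((∑ i ∈ Finset.range (nc m + 1), acc / bcc * Real.exp (-bcc * (t - Ac m i)))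
          + (∑ j ∈ Finset.Icc 1 (na m), aca / bca * Real.exp (-bca * (t - Aa m j)))
          + (∑ i ∈ Finset.range (nc m + 1), aac / bac * Real.exp (-bac * (t - Ac m i)))
          + (∑ j ∈ Finset.Icc 1 (na m), aaa / baa * Real.exp (-baa * (t - Aa m j))))) :=
    Finset.sum_congr rfl (fun m _ => hint m)
  exact ⟨fun m _ => ((hI1 m).add (hI2 m)).add ((hI3 m).add (hI4 m)), hsum,
    by rw [hsum]⟩
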